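/- Every ℝ-algebra automorphism φ of the quaternion algebra ℍ is inner: there exists a nonzero quaternion u such that φ(x) = u * x * u⁻¹ for all x ∈ ℍ. (This is the surjectivity part of the paper's claim that the automorphism group of ℍ is SO(3).) -/

import Mathlib

open Quaternion

noncomputable section

private def qi : Quaternion ℝ := ⟨0,1,0,0⟩
private def qj : Quaternion ℝ := ⟨0,0,1,0⟩

@[simp] private lemma qi_re : qi.re = 0 := rfl
@[simp] private lemma qi_imI : qi.imI = 1 := rfl
@[simp] private lemma qi_imJ : qi.imJ = 0 := rfl
@[simp] private lemma qi_imK : qi.imK = 0 := rfl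
@[simp] private lemma qj_re : qj.re = 0 := rfl
@[simp] private lemma qj_imI : qj.imI = 0 := rfl
@[simp] private lemma qj_imJ : qj.imJ = 1 := rfl
@[simp] private lemma qj_imK : qj.imK = 0 := rfl

private lemma qii : qi * qi = -1 := by ext <;> simp
private lemma qjj : qj * qj = -1 := by ext <;> simp
private lemma qijji : qi * qj = -(qj * qi) := by ext <;> simp

private lemma decomp (x : Quaternion ℝ) :
    x = x.re • 1 + x.imI • qi + x.imJ • qj + x.imK • (qi * qj) := by
  ext <;> simp

theorem quaternion_alg_aut_inner (φ : Quaternion ℝ ≃ₐ[ℝ] Quaternion ℝ) :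
    ∃ u : Quaternion ℝ, u ≠ 0 ∧ ∀ x : Quaternion ℝ, φ x = u * x * u⁻¹ := by
  set p := φ qi with hp
  set q := φ qj with hq
  have hpp : p * p = -1 := by rw [hp, ← map_mul, qii, map_neg, map_one]
  have hqq : q * q = -1 := by rw [hq, ← map_mul, qjj, map_neg, map_one]
  have hpq : p * q = -(q * p) := by
    rw [hp, hq, ← map_mul, ← map_mul, ← map_neg, qijji]
  -- step 1: u1 with u1 ≠ 0 and u1 * qi = p * u1
  obtain ⟨u1, hu1, hu1i⟩ : ∃ u1 : Quaternion ℝ, u1 ≠ 0 ∧ u1 * qi = p * u1 := by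
    by_cases h : 1 - p * qi = 0
    · refine ⟨qj, ?_, ?_⟩
      · intro h'; simpa [Quaternion.ext_iff] using h'
      · have hpv : p = -qi := by
          have h1 : p * qi = 1 := by linear_combination (norm := noncomm_ring) -h
          have h2 := congrArg (· * qi) h1
          simp only [mul_assoc, qii] at h2
          have h3 : qi = -p := by simpa using h2.symm
          rw [h3, neg_neg]
        rw [hpv]
        ext <;> simp
    · refine ⟨1 - p * qi, h, ?_⟩
      calc (1 - p * qi) * qi = qi - p * (qi * qi) := by noncomm_ring
        _ = qi + p := by rw [qii]; noncomm_ring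
        _ = p * (1 - p * qi) := by rw [mul_sub, ← mul_assoc, hpp]; noncomm_ring
  -- q' := u1⁻¹ * q * u1
  set q' : Quaternion ℝ := u1⁻¹ * q * u1 with hq'
  have hiu1 : qi * u1⁻¹ = u1⁻¹ * p := by
    calc qi * u1⁻¹ = u1⁻¹ * (u1 * qi) * u1⁻¹ := by
          rw [← mul_assoc, inv_mul_cancel₀ hu1, one_mul]
      _ = u1⁻¹ * (p * u1) * u1⁻¹ := by rw [hu1i]
      _ = u1⁻¹ * p := by rw [mul_assoc, mul_assoc, mul_inv_cancel₀ hu1, mul_one]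
  have hqq' : q' * q' = -1 := by
    rw [hq', mul_assoc, mul_assoc, ← mul_assoc u1 _ _, ← mul_assoc u1 _ _,
      mul_inv_cancel₀ hu1, one_mul, ← mul_assoc, ← mul_assoc, mul_assoc _ q q, hqq]
    simp [inv_mul_cancel₀ hu1, mul_assoc]
  have hq'i : q' * qi = -(qi * q') := by
    have hqp : q * p = -(p * q) := by rw [hpq, neg_neg]
    calc q' * qi = u1⁻¹ * q * (u1 * qi) := by rw [hq']; noncomm_ring
      _ = u1⁻¹ * (q * p) * u1 := by rw [hu1i]; noncomm_ring
      _ = -(u1⁻¹ * p * (q * u1)) := by rw [hqp]; noncomm_ring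
      _ = -(qi * u1⁻¹ * (q * u1)) := by rw [hiu1]
      _ = -(qi * q') := by rw [hq']; noncomm_ring
  -- step 2: v with v ≠ 0, v * qi = qi * v, v * qj = q' * v
  obtain ⟨v, hv, hvi, hvj⟩ : ∃ v : Quaternion ℝ, v ≠ 0 ∧ v * qi = qi * v ∧ v * qj = q' * v := by
    by_cases h : 1 - q' * qj = 0
    · refine ⟨qi, ?_, rfl, ?_⟩
      · intro h'; simpa [Quaternion.ext_iff] using h'
      · have hqv : q' = -qj := by
          have h1 : q' * qj = 1 := by linear_combination (norm := noncomm_ring) -h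
          have h2 := congrArg (· * qj) h1
          simp only [mul_assoc, qjj] at h2
          have h3 : qj = -q' := by simpa using h2.symm
          rw [h3, neg_neg]
        rw [hqv]
        ext <;> simp
    · refine ⟨1 - q' * qj, h, ?_, ?_⟩
      · -- uses q' * qi = -(qi * q') and qj * qi = -(qi * qj)
        have hji : qj * qi = -(qi * qj) := by rw [qijji, neg_neg]
        calc (1 - q' * qj) * qi = qi - q' * (qj * qi) := by noncomm_ring
          _ = qi + q' * (qi * qj) := by rw [hji]; noncomm_ring
          _ = qi + -(qi * q') * qj := by rw [← hq'i]; noncomm_ring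
          _ = qi * (1 - q' * qj) := by noncomm_ring
      · calc (1 - q' * qj) * qj = qj - q' * (qj * qj) := by noncomm_ring
          _ = qj + q' := by rw [qjj]; noncomm_ring
          _ = q' * (1 - q' * qj) := by rw [mul_sub, ← mul_assoc, hqq']; noncomm_ring
  refine ⟨u1 * v, mul_ne_zero hu1 hv, ?_⟩
  have hui : (u1 * v) * qi = p * (u1 * v) := by
    rw [mul_assoc, hvi, ← mul_assoc, hu1i]; noncomm_ring
  have huj : (u1 * v) * qj = q * (u1 * v) := by
    calc (u1 * v) * qj = u1 * (v * qj) := by rw [mul_assoc]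
      _ = u1 * (u1⁻¹ * q * u1 * v) := by rw [hvj, hq']
      _ = (u1 * u1⁻¹) * q * (u1 * v) := by noncomm_ring
      _ = q * (u1 * v) := by rw [mul_inv_cancel₀ hu1, one_mul]
  set u := u1 * v with hu
  have hune : u ≠ 0 := mul_ne_zero hu1 hv
  intro x
  have key : φ x * u = u * x := by
    conv_lhs => rw [decomp x]
    conv_rhs => rw [decomp x]
    rw [map_add, map_add, map_add, map_smul, map_smul, map_smul, map_smul,
      map_one, map_mul, ← hp, ← hq]
    have hpqu : (p * q) * u = u * (qi * qj) := by
      rw [mul_assoc, ← huj, ← mul_assoc, ← hui, mul_assoc]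
    rw [add_mul, add_mul, add_mul, mul_add, mul_add, mul_add,
      smul_mul_assoc, smul_mul_assoc, smul_mul_assoc, smul_mul_assoc,
      mul_smul_comm, mul_smul_comm, mul_smul_comm, mul_smul_comm,
      hui, huj, hpqu, one_mul, mul_one]
  rw [← key, mul_assoc, mul_inv_cancel₀ hune, mul_one]

end
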